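/- Composition of Lagrangian relations is Lagrangian: if L ⊆ V̄ ⊕ W and L' ⊆ W̄ ⊕ U are Lagrangian subspaces, then the relational composite L'∘L = {(v, u) : ∃ w, (v, w) ∈ L ∧ (w, u) ∈ L'} is a Lagrangian subspace of V̄ ⊕ U. -/

import Mathlib

open Module Submodule


/-- A subspace L is Lagrangian with respect to a form Ω if it equals its
symplectic complement: Ω vanishes on L, and any vector Ω-orthogonal to L
lies in L. -/
def IsLagrangian {M : Type*} [AddCommGroup M] [Module ℝ M]
    (Ω : M → M → ℝ) (L : Submodule ℝ M) : Prop :=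
  (∀ x ∈ L, ∀ y ∈ L, Ω x y = 0) ∧ (∀ z, (∀ y ∈ L, Ω z y = 0) → z ∈ L)

section Aux

variable {E : Type*} [AddCommGroup E] [Module ℝ E]

lemma isRefl_of_alt (B : LinearMap.BilinForm ℝ E) (halt : ∀ x y, B x y = -B y x) :
    B.IsRefl := fun x y hxy => by rw [halt]; simp [hxy]

lemma orth_eq_of_lagrangian (B : LinearMap.BilinForm ℝ E)
    (halt : ∀ x y, B x y = -B y x) (L : Submodule ℝ E)
    (h : IsLagrangian (fun x y => B x y) L) : B.orthogonal L = L := by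
  ext z
  rw [LinearMap.BilinForm.mem_orthogonal_iff]
  constructor
  · intro hz
    refine h.2 z fun y hy => ?_
    have hyz : B y z = 0 := hz y hy
    show B z y = 0
    rw [halt, hyz, neg_zero]
  · intro hz n hn
    exact h.1 n hn z hz

lemma two_finrank_lagrangian [FiniteDimensional ℝ E] (B : LinearMap.BilinForm ℝ E)
    (halt : ∀ x y, B x y = -B y x) (hnd : B.Nondegenerate) (L : Submodule ℝ E)
    (h : IsLagrangian (fun x y => B x y) L) : 2 * finrank ℝ L = finrank ℝ E := by
  have hfr := LinearMap.BilinForm.finrank_orthogonal hnd L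
  rw [orth_eq_of_lagrangian B halt L h] at hfr
  have hle := Submodule.finrank_le L
  omega

lemma lagrangian_of_isotropic [FiniteDimensional ℝ E] (B : LinearMap.BilinForm ℝ E)
    (halt : ∀ x y, B x y = -B y x) (hnd : B.Nondegenerate) (M : Submodule ℝ E)
    (hiso : ∀ x ∈ M, ∀ y ∈ M, B x y = 0) (hdim : 2 * finrank ℝ M = finrank ℝ E) :
    IsLagrangian (fun x y => B x y) M := by
  have hrefl := isRefl_of_alt B halt
  have hle : M ≤ B.orthogonal M := fun m hm =>
    (LinearMap.BilinForm.mem_orthogonal_iff).2 fun n hn => hiso n hn m hm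
  have hfr := LinearMap.BilinForm.finrank_orthogonal hnd M
  have heq : B.orthogonal M = M :=
    (Submodule.eq_of_le_of_finrank_le hle (by omega)).symm
  refine ⟨hiso, fun z hz => ?_⟩
  rw [← heq]
  exact (LinearMap.BilinForm.mem_orthogonal_iff).2 fun n hn => hrefl _ _ (hz n hn)

end Aux

section PairForm

variable {A B : Type*} [AddCommGroup A] [Module ℝ A] [AddCommGroup B] [Module ℝ B]

def pairForm (ωA : A →ₗ[ℝ] A →ₗ[ℝ] ℝ) (ωB : B →ₗ[ℝ] B →ₗ[ℝ] ℝ) :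
    LinearMap.BilinForm ℝ (A × B) :=
  LinearMap.mk₂ ℝ (fun a b => -ωA a.1 b.1 + ωB a.2 b.2)
    (fun m₁ m₂ n => by simp; ring)
    (fun c m n => by simp; ring)
    (fun m n₁ n₂ => by simp; ring)
    (fun c m n => by simp; ring)

@[simp] lemma pairForm_apply (ωA : A →ₗ[ℝ] A →ₗ[ℝ] ℝ) (ωB : B →ₗ[ℝ] B →ₗ[ℝ] ℝ)
    (a b : A × B) : pairForm ωA ωB a b = -ωA a.1 b.1 + ωB a.2 b.2 := rfl

lemma pairForm_alt (ωA : A →ₗ[ℝ] A →ₗ[ℝ] ℝ) (ωB : B →ₗ[ℝ] B →ₗ[ℝ] ℝ)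
    (hA : ∀ x y, ωA x y = -ωA y x) (hB : ∀ x y, ωB x y = -ωB y x) :
    ∀ x y, pairForm ωA ωB x y = -(pairForm ωA ωB y x) := by
  intro x y
  simp only [pairForm_apply]
  rw [hA x.1 y.1, hB x.2 y.2]
  ring

lemma pairForm_nondeg (ωA : A →ₗ[ℝ] A →ₗ[ℝ] ℝ) (ωB : B →ₗ[ℝ] B →ₗ[ℝ] ℝ)
    (hA : ∀ x, (∀ y, ωA x y = 0) → x = 0) (hB : ∀ x, (∀ y, ωB x y = 0) → x = 0) :
    (pairForm ωA ωB).SeparatingLeft := by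
  intro x hx
  have h1 : x.1 = 0 := hA _ fun y => by have := hx (y, 0); simp at this; linarith
  have h2 : x.2 = 0 := hB _ fun y => by have := hx (0, y); simp at this; linarith
  exact Prod.ext h1 h2

end PairForm

set_option maxHeartbeats 1000000 in
/-- Composition of Lagrangian relations is Lagrangian: if L ⊆ V̄ ⊕ W and
L' ⊆ W̄ ⊕ U are Lagrangian, so is the relational composite L' ∘ L ⊆ V̄ ⊕ U. -/
theorem lagrangian_relations_compose
    {V W U : Type}
    [AddCommGroup V] [Module ℝ V] [FiniteDimensional ℝ V]
    [AddCommGroup W] [Module ℝ W] [FiniteDimensional ℝ W]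
    [AddCommGroup U] [Module ℝ U] [FiniteDimensional ℝ U]
    (ωV : V →ₗ[ℝ] V →ₗ[ℝ] ℝ) (ωW : W →ₗ[ℝ] W →ₗ[ℝ] ℝ) (ωU : U →ₗ[ℝ] U →ₗ[ℝ] ℝ)
    (hValt : ∀ x y, ωV x y = -ωV y x) (hWalt : ∀ x y, ωW x y = -ωW y x)
    (hUalt : ∀ x y, ωU x y = -ωU y x)
    (hVnd : ∀ x, (∀ y, ωV x y = 0) → x = 0)
    (hWnd : ∀ x, (∀ y, ωW x y = 0) → x = 0)
    (hUnd : ∀ x, (∀ y, ωU x y = 0) → x = 0)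
    (ΩVW : V × W → V × W → ℝ) (hΩVW : ∀ a b, ΩVW a b = -ωV a.1 b.1 + ωW a.2 b.2)
    (ΩWU : W × U → W × U → ℝ) (hΩWU : ∀ a b, ΩWU a b = -ωW a.1 b.1 + ωU a.2 b.2)
    (ΩVU : V × U → V × U → ℝ) (hΩVU : ∀ a b, ΩVU a b = -ωV a.1 b.1 + ωU a.2 b.2)
    (L : Submodule ℝ (V × W)) (L' : Submodule ℝ (W × U))
    (hL : IsLagrangian ΩVW L) (hL' : IsLagrangian ΩWU L') :
    ∃ M : Submodule ℝ (V × U),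
      (M : Set (V × U)) = { p | ∃ w, (p.1, w) ∈ L ∧ (w, p.2) ∈ L' } ∧
      IsLagrangian ΩVU M := by
  classical
  set BVW := pairForm ωV ωW with hBVWdef
  set BWU := pairForm ωW ωU with hBWUdef
  set BVU := pairForm ωV ωU with hBVUdef
  have eVW : ∀ a b, ΩVW a b = BVW a b := fun a b => by rw [hΩVW]; rfl
  have eWU : ∀ a b, ΩWU a b = BWU a b := fun a b => by rw [hΩWU]; rfl
  have eVU : ∀ a b, ΩVU a b = BVU a b := fun a b => by rw [hΩVU]; rfl
  have hLB : IsLagrangian (fun x y => BVW x y) L :=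
    ⟨fun x hx y hy => by show BVW x y = 0; rw [← eVW]; exact hL.1 x hx y hy,
     fun z hz => hL.2 z fun y hy => by rw [eVW]; exact hz y hy⟩
  have hLB' : IsLagrangian (fun x y => BWU x y) L' :=
    ⟨fun x hx y hy => by show BWU x y = 0; rw [← eWU]; exact hL'.1 x hx y hy,
     fun z hz => hL'.2 z fun y hy => by rw [eWU]; exact hz y hy⟩
  -- the projection and difference maps
  set f : ((V × W) × (W × U)) →ₗ[ℝ] V × U :=
    ((LinearMap.fst ℝ V W).comp (LinearMap.fst ℝ (V × W) (W × U))).prod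
      ((LinearMap.snd ℝ W U).comp (LinearMap.snd ℝ (V × W) (W × U))) with hfdef
  set g : ((V × W) × (W × U)) →ₗ[ℝ] W :=
    (LinearMap.snd ℝ V W).comp (LinearMap.fst ℝ (V × W) (W × U)) -
      (LinearMap.fst ℝ W U).comp (LinearMap.snd ℝ (V × W) (W × U)) with hgdef
  have hfapp : ∀ x : (V × W) × (W × U), f x = (x.1.1, x.2.2) := fun x => rfl
  have hgapp : ∀ x : (V × W) × (W × U), g x = x.1.2 - x.2.1 := fun x => rfl
  set P := L.prod L' with hPdef
  set T := P ⊓ LinearMap.ker g with hTdef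
  set M := T.map f with hMdef
  have hmemM : ∀ p : V × U, p ∈ M ↔ ∃ w, (p.1, w) ∈ L ∧ (w, p.2) ∈ L' := by
    intro p
    constructor
    · rintro ⟨x, ⟨hxP, hxg⟩, rfl⟩
      simp only [hPdef, SetLike.mem_coe, Submodule.mem_prod] at hxP
      have hw : x.1.2 = x.2.1 := by
        have := hgapp x
        simp only [SetLike.mem_coe, LinearMap.mem_ker] at hxg
        rw [hxg] at this
        have := sub_eq_zero.mp this.symm
        exact this
      refine ⟨x.1.2, ?_, ?_⟩
      · rw [hfapp]; simpa using hxP.1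
      · rw [hfapp, hw]; simpa using hxP.2
    · rintro ⟨w, h1, h2⟩
      refine ⟨((p.1, w), (w, p.2)), ⟨?_, ?_⟩, ?_⟩
      · simp only [hPdef, SetLike.mem_coe, Submodule.mem_prod]; exact ⟨h1, h2⟩
      · simp only [SetLike.mem_coe, LinearMap.mem_ker, hgapp]; simp
      · rw [hfapp]
  -- isotropy of M
  have hMiso : ∀ x ∈ M, ∀ y ∈ M, BVU x y = 0 := by
    rintro x ⟨a, ⟨haP, hag⟩, rfl⟩ y ⟨b, ⟨hbP, hbg⟩, rfl⟩
    simp only [hPdef, SetLike.mem_coe, Submodule.mem_prod] at haP hbP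
    simp only [SetLike.mem_coe, LinearMap.mem_ker] at hag hbg
    have haw : a.1.2 = a.2.1 := sub_eq_zero.mp (by rw [← hgapp]; exact hag)
    have hbw : b.1.2 = b.2.1 := sub_eq_zero.mp (by rw [← hgapp]; exact hbg)
    have h1 : -ωV a.1.1 b.1.1 + ωW a.1.2 b.1.2 = 0 := hLB.1 a.1 haP.1 b.1 hbP.1
    have h2 : -ωW a.2.1 b.2.1 + ωU a.2.2 b.2.2 = 0 := hLB'.1 a.2 haP.2 b.2 hbP.2
    rw [hfapp a, hfapp b]
    show -ωV a.1.1 b.1.1 + ωU a.2.2 b.2.2 = 0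
    rw [haw, hbw] at h1
    linarith
  -- dimension count
  set S := P.map g with hSdef
  have d1 : finrank ℝ S + finrank ℝ T = finrank ℝ P := by
    have hrn := LinearMap.finrank_range_add_finrank_ker (g.comp P.subtype)
    rw [LinearMap.range_comp, Submodule.range_subtype, LinearMap.ker_comp] at hrn
    have hk : finrank ℝ (Submodule.map P.subtype (Submodule.comap P.subtype
        (LinearMap.ker g))) = finrank ℝ (Submodule.comap P.subtype (LinearMap.ker g)) :=
      Submodule.finrank_map_subtype_eq _ _
    rw [Submodule.map_comap_subtype] at hk
    rw [← hk] at hrn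
    exact hrn
  set KW := (Submodule.comap (LinearMap.inr ℝ V W) L) ⊓
      (Submodule.comap (LinearMap.inl ℝ W U) L') with hKWdef
  set h : W →ₗ[ℝ] (V × W) × (W × U) :=
    (LinearMap.inr ℝ V W).prod (LinearMap.inl ℝ W U) with hhdef
  have hhapp : ∀ w : W, h w = ((0, w), (w, 0)) := fun w => rfl
  have hinj : Function.Injective h := by
    intro a b hab
    have := congrArg (fun x : (V × W) × (W × U) => x.1.2) hab
    simpa [hhapp] using this
  have d3 : T ⊓ LinearMap.ker f = KW.map h := by
    ext x
    constructor
    · rintro ⟨⟨hxP, hxg⟩, hxf⟩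
      simp only [hPdef, SetLike.mem_coe, Submodule.mem_prod] at hxP
      simp only [SetLike.mem_coe, LinearMap.mem_ker] at hxg hxf
      have hxf' : (x.1.1, x.2.2) = ((0 : V), (0 : U)) := by rw [← hfapp]; exact hxf
      have h11 : x.1.1 = 0 := congrArg Prod.fst hxf'
      have h22 : x.2.2 = 0 := congrArg Prod.snd hxf'
      have hw : x.1.2 = x.2.1 := sub_eq_zero.mp (by rw [← hgapp]; exact hxg)
      refine ⟨x.1.2, ⟨?_, ?_⟩, ?_⟩
      · show ((0 : V), x.1.2) ∈ L
        rw [← h11]; simpa using hxP.1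
      · show (x.1.2, (0 : U)) ∈ L'
        rw [hw, ← h22]; simpa using hxP.2
      · rw [hhapp]
        ext
        · exact h11.symm
        · rfl
        · exact hw
        · exact h22.symm
    · rintro ⟨w, ⟨hw1, hw2⟩, rfl⟩
      rw [hhapp]
      refine ⟨⟨?_, ?_⟩, ?_⟩
      · simp only [hPdef, SetLike.mem_coe, Submodule.mem_prod]; exact ⟨hw1, hw2⟩
      · simp only [SetLike.mem_coe, LinearMap.mem_ker, hgapp]; simp
      · simp only [SetLike.mem_coe, LinearMap.mem_ker, hfapp]; simp
  have d2 : finrank ℝ M + finrank ℝ KW = finrank ℝ T := by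
    have hrn := LinearMap.finrank_range_add_finrank_ker (f.comp T.subtype)
    rw [LinearMap.range_comp, Submodule.range_subtype, LinearMap.ker_comp] at hrn
    have hk : finrank ℝ (Submodule.map T.subtype (Submodule.comap T.subtype
        (LinearMap.ker f))) = finrank ℝ (Submodule.comap T.subtype (LinearMap.ker f)) :=
      Submodule.finrank_map_subtype_eq _ _
    rw [Submodule.map_comap_subtype, d3] at hk
    have hk2 : finrank ℝ (KW.map h) = finrank ℝ KW :=
      ((Submodule.equivMapOfInjective h hinj KW).finrank_eq).symm
    rw [← hk, hk2] at hrn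
    exact hrn
  -- KW is the ωW-orthogonal of S
  have d5 : LinearMap.BilinForm.orthogonal ωW S = KW := by
    ext w
    rw [LinearMap.BilinForm.mem_orthogonal_iff]
    constructor
    · intro hw
      rw [hKWdef, Submodule.mem_inf]
      constructor
      · rw [Submodule.mem_comap]
        show ((0 : V), w) ∈ L
        refine hLB.2 _ fun y hy => ?_
        have hyS : y.2 ∈ S := ⟨(y, (0, 0)), by
          refine ⟨by simp only [hPdef, SetLike.mem_coe, Submodule.mem_prod]; exact ⟨hy, Submodule.zero_mem _⟩, ?_⟩
          rw [hgapp]; simp⟩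
        have := hw y.2 hyS
        have h0 : ωW y.2 w = 0 := this
        show BVW ((0 : V), w) y = 0
        rw [pairForm_apply]
        simp only [map_zero, LinearMap.zero_apply]
        have : ωW w y.2 = 0 := by rw [hWalt, h0, neg_zero]
        simpa using this
      · rw [Submodule.mem_comap]
        show (w, (0 : U)) ∈ L'
        refine hLB'.2 _ fun y hy => ?_
        have hyS : -y.1 ∈ S := ⟨((0, 0), y), by
          refine ⟨by simp only [hPdef, SetLike.mem_coe, Submodule.mem_prod]; exact ⟨Submodule.zero_mem _, hy⟩, ?_⟩
          rw [hgapp]; simp⟩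
        have h0 : ωW (-y.1) w = 0 := hw (-y.1) hyS
        have h0' : ωW y.1 w = 0 := by
          have : -ωW y.1 w = 0 := by rw [← h0]; simp
          linarith
        show BWU (w, (0 : U)) y = 0
        rw [pairForm_apply]
        have : ωW w y.1 = 0 := by rw [hWalt, h0', neg_zero]
        simp [this]
    · intro hwk s hs
      rw [hKWdef, Submodule.mem_inf] at hwk
      obtain ⟨hw1', hw2'⟩ := hwk
      rw [Submodule.mem_comap] at hw1' hw2'
      have hw1 : ((0 : V), w) ∈ L := hw1'
      have hw2 : (w, (0 : U)) ∈ L' := hw2'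
      obtain ⟨x, hxP, rfl⟩ := hs
      simp only [hPdef, SetLike.mem_coe, Submodule.mem_prod] at hxP
      have h1 : BVW x.1 ((0 : V), w) = 0 := hLB.1 x.1 hxP.1 _ hw1
      have h2 : BWU x.2 (w, (0 : U)) = 0 := hLB'.1 x.2 hxP.2 _ hw2
      rw [pairForm_apply] at h1 h2
      simp only [map_zero, LinearMap.map_zero] at h1 h2
      show ωW (g x) w = 0
      rw [hgapp, map_sub, LinearMap.sub_apply]
      have e1 : ωW x.1.2 w = 0 := by simpa using h1
      have e2 : ωW x.2.1 w = 0 := by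
        have : -ωW x.2.1 w = 0 := by simpa using h2
        linarith
      rw [e1, e2, sub_zero]
  have d6 : finrank ℝ KW = finrank ℝ W - finrank ℝ S := by
    rw [← d5]
    exact LinearMap.BilinForm.finrank_orthogonal ((isRefl_of_alt ωW hWalt).nondegenerate_iff_separatingLeft.2 hWnd) S
  have d6' : finrank ℝ S ≤ finrank ℝ W := Submodule.finrank_le S
  -- dimension of P
  have eP : (P : Submodule ℝ ((V × W) × (W × U))) ≃ₗ[ℝ] L × L' :=
    { toFun := fun x => (⟨x.val.1, x.2.1⟩, ⟨x.val.2, x.2.2⟩)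
      map_add' := fun a b => rfl
      map_smul' := fun c a => rfl
      invFun := fun y => ⟨(y.1.val, y.2.val), ⟨y.1.2, y.2.2⟩⟩
      left_inv := fun a => rfl
      right_inv := fun y => rfl }
  have d7 : finrank ℝ P = finrank ℝ L + finrank ℝ L' := by
    rw [eP.finrank_eq, Module.finrank_prod]
  have d8 : 2 * finrank ℝ L = finrank ℝ V + finrank ℝ W := by
    have := two_finrank_lagrangian BVW (pairForm_alt ωV ωW hValt hWalt)
      ((isRefl_of_alt _ (pairForm_alt ωV ωW hValt hWalt)).nondegenerate_iff_separatingLeft.2 (pairForm_nondeg ωV ωW hVnd hWnd)) L hLB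
    rwa [Module.finrank_prod] at this
  have d9 : 2 * finrank ℝ L' = finrank ℝ W + finrank ℝ U := by
    have := two_finrank_lagrangian BWU (pairForm_alt ωW ωU hWalt hUalt)
      ((isRefl_of_alt _ (pairForm_alt ωW ωU hWalt hUalt)).nondegenerate_iff_separatingLeft.2 (pairForm_nondeg ωW ωU hWnd hUnd)) L' hLB'
    rwa [Module.finrank_prod] at this
  have hdim : 2 * finrank ℝ M = finrank ℝ (V × U) := by
    rw [Module.finrank_prod]
    omega
  have hlag : IsLagrangian (fun x y => BVU x y) M :=
    lagrangian_of_isotropic BVU (pairForm_alt ωV ωU hValt hUalt)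
      ((isRefl_of_alt _ (pairForm_alt ωV ωU hValt hUalt)).nondegenerate_iff_separatingLeft.2 (pairForm_nondeg ωV ωU hVnd hUnd)) M hMiso hdim
  refine ⟨M, ?_, ?_⟩
  · ext p
    simp only [SetLike.mem_coe, Set.mem_setOf_eq]
    exact hmemM p
  · exact ⟨fun x hx y hy => by rw [eVU]; exact hlag.1 x hx y hy,
      fun z hz => hlag.2 z fun y hy => by show BVU z y = 0; rw [← eVU]; exact hz y hy⟩
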